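/- In the group algebra Q[W] of the hyperoctahedral group of rank n, with x_j (0 <= j <= n) the sum of all signed permutations w with 0 < w(1) < ... < w(j), one has for all 0 <= j,k <= n: x_j * x_k = sum over l from 0 to min(j,k) of (n-j choose k-l)*(n-k choose j-l)*(n-j-k+l)! * 2^(n-j-k+l) * x_l, where terms with n-j-k+l < 0 vanish. -/

import Mathlib

open scoped Classical

def Bgroup (n : ℕ) : Subgroup (Equiv.Perm (Fin n ⊕ Fin n)) where
  carrier := {w | ∀ x, w x.swap = (w x).swap}
  one_mem' := by intro x; rfl
  mul_mem' := by
    intro a b ha hb x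
    simp only [Equiv.Perm.mul_apply, hb x, ha (b x)]
  inv_mem' := by
    intro a ha x
    have h := ha (a⁻¹ x)
    rw [show a (a⁻¹ x) = x from a.apply_symm_apply x] at h
    rw [← h, show ∀ y, a⁻¹ (a y) = y from a.symm_apply_apply]

def bval (n : ℕ) : Fin n ⊕ Fin n → ℤ :=
  Sum.elim (fun i => (i : ℤ) + 1) (fun i => -((i : ℤ) + 1))

def bvalOf (n : ℕ) (w : Equiv.Perm (Fin n ⊕ Fin n)) (i : ℕ) : ℤ :=
  if h : 1 ≤ i ∧ i ≤ n then bval n (w (Sum.inl ⟨i - 1, by omega⟩)) else 0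

namespace BAux

variable {n : ℕ}

/-- absolute value part -/
def av : Fin n ⊕ Fin n → Fin n := Sum.elim id id

lemma av_swap (x : Fin n ⊕ Fin n) : av x.swap = av x := by cases x <;> rfl

lemma uprop (u : Bgroup n) (x : Fin n ⊕ Fin n) :
    (u : Equiv.Perm (Fin n ⊕ Fin n)) x.swap = ((u : Equiv.Perm (Fin n ⊕ Fin n)) x).swap :=
  u.2 x

/-- the permutation part of a signed permutation -/
def pp (u : Bgroup n) : Equiv.Perm (Fin n) where
  toFun i := av ((u : Equiv.Perm (Fin n ⊕ Fin n)) (Sum.inl i))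
  invFun i := av ((u : Equiv.Perm (Fin n ⊕ Fin n))⁻¹ (Sum.inl i))
  left_inv i := by
    rcases h : (u : Equiv.Perm (Fin n ⊕ Fin n)) (Sum.inl i) with a | a
    · have h3 : (u : Equiv.Perm (Fin n ⊕ Fin n))⁻¹ (Sum.inl a) = Sum.inl i := by
        rw [Equiv.Perm.inv_eq_iff_eq, h]
      simp [h, av, h3]
    · have h2 : (u : Equiv.Perm (Fin n ⊕ Fin n)) (Sum.inr i) = Sum.inl a := by
        have := uprop u (Sum.inl i)
        simp only [Sum.swap_inl, h, Sum.swap_inr] at this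
        exact this
      have h3 : (u : Equiv.Perm (Fin n ⊕ Fin n))⁻¹ (Sum.inl a) = Sum.inr i := by
        rw [Equiv.Perm.inv_eq_iff_eq, h2]
      simp [h, av, h3]
  right_inv i := by
    rcases h : (u : Equiv.Perm (Fin n ⊕ Fin n))⁻¹ (Sum.inl i) with a | a
    · have : (u : Equiv.Perm (Fin n ⊕ Fin n)) (Sum.inl a) = Sum.inl i := by
        rw [← h]; simp
      simp [h, av, this]
    · have h1 : (u : Equiv.Perm (Fin n ⊕ Fin n)) (Sum.inr a) = Sum.inl i := by
        rw [← h]; simp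
      have : (u : Equiv.Perm (Fin n ⊕ Fin n)) (Sum.inl a) = Sum.inr i := by
        have := uprop u (Sum.inr a)
        simp only [Sum.swap_inr, Sum.swap_inl, h1] at this
        exact this
      simp [h, av, this]

/-- the sign part of a signed permutation -/
def sp (u : Bgroup n) : Fin n → Bool := fun i => ((u : Equiv.Perm (Fin n ⊕ Fin n)) (Sum.inl i)).isRight

lemma apply_inl_false (u : Bgroup n) (i : Fin n) (h : sp u i = false) :
    (u : Equiv.Perm (Fin n ⊕ Fin n)) (Sum.inl i) = Sum.inl (pp u i) := by
  rcases h' : (u : Equiv.Perm (Fin n ⊕ Fin n)) (Sum.inl i) with a | a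
  · simp [pp, av, h', Equiv.coe_fn_mk]
  · exfalso; simp [sp, h'] at h

lemma apply_inl_true (u : Bgroup n) (i : Fin n) (h : sp u i = true) :
    (u : Equiv.Perm (Fin n ⊕ Fin n)) (Sum.inl i) = Sum.inr (pp u i) := by
  rcases h' : (u : Equiv.Perm (Fin n ⊕ Fin n)) (Sum.inl i) with a | a
  · exfalso; simp [sp, h'] at h
  · simp [pp, av, h', Equiv.coe_fn_mk]

lemma apply_inl (u : Bgroup n) (i : Fin n) :
    (u : Equiv.Perm (Fin n ⊕ Fin n)) (Sum.inl i) =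
      (if sp u i then Sum.inr (pp u i) else Sum.inl (pp u i)) := by
  rcases h : sp u i
  · simpa using apply_inl_false u i h
  · simpa using apply_inl_true u i h

lemma apply_inr_false (u : Bgroup n) (i : Fin n) (h : sp u i = false) :
    (u : Equiv.Perm (Fin n ⊕ Fin n)) (Sum.inr i) = Sum.inr (pp u i) := by
  have := uprop u (Sum.inl i)
  simp only [Sum.swap_inl] at this
  rw [this, apply_inl_false u i h]
  rfl

lemma apply_inr_true (u : Bgroup n) (i : Fin n) (h : sp u i = true) :
    (u : Equiv.Perm (Fin n ⊕ Fin n)) (Sum.inr i) = Sum.inl (pp u i) := by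
  have := uprop u (Sum.inl i)
  simp only [Sum.swap_inl] at this
  rw [this, apply_inl_true u i h]
  rfl

lemma ext_of (u v : Bgroup n) (h1 : pp u = pp v) (h2 : sp u = sp v) : u = v := by
  apply Subtype.ext
  apply Equiv.ext
  intro x
  rcases x with i | i
  · rcases h : sp u i
    · rw [apply_inl_false u i h, apply_inl_false v i (by rw [← h2]; exact h), h1]
    · rw [apply_inl_true u i h, apply_inl_true v i (by rw [← h2]; exact h), h1]
  · rcases h : sp u i
    · rw [apply_inr_false u i h, apply_inr_false v i (by rw [← h2]; exact h), h1]
    · rw [apply_inr_true u i h, apply_inr_true v i (by rw [← h2]; exact h), h1]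

lemma pp_mul (u v : Bgroup n) : pp (u * v) = pp u * pp v := by
  apply Equiv.ext
  intro i
  have h : ((u * v : Bgroup n) : Equiv.Perm (Fin n ⊕ Fin n)) (Sum.inl i)
      = (u : Equiv.Perm (Fin n ⊕ Fin n)) ((v : Equiv.Perm (Fin n ⊕ Fin n)) (Sum.inl i)) := rfl
  show av _ = pp u (pp v i)
  rw [h]
  rcases hs : sp v i
  · rw [apply_inl_false v i hs]
    rcases hs2 : sp u (pp v i)
    · rw [apply_inl_false u _ hs2]; rfl
    · rw [apply_inl_true u _ hs2]; rfl
  · rw [apply_inl_true v i hs]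
    rcases hs2 : sp u (pp v i)
    · rw [apply_inr_false u _ hs2]; rfl
    · rw [apply_inr_true u _ hs2]; rfl

lemma sp_mul (u v : Bgroup n) (i : Fin n) :
    sp (u * v) i = xor (sp v i) (sp u (pp v i)) := by
  have h : ((u * v : Bgroup n) : Equiv.Perm (Fin n ⊕ Fin n)) (Sum.inl i)
      = (u : Equiv.Perm (Fin n ⊕ Fin n)) ((v : Equiv.Perm (Fin n ⊕ Fin n)) (Sum.inl i)) := rfl
  show Sum.isRight _ = _
  rw [h]
  rcases hs : sp v i
  · rw [apply_inl_false v i hs]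
    rcases hs2 : sp u (pp v i)
    · rw [apply_inl_false u _ hs2]; rfl
    · rw [apply_inl_true u _ hs2]; rfl
  · rw [apply_inl_true v i hs]
    rcases hs2 : sp u (pp v i)
    · rw [apply_inr_false u _ hs2]; rfl
    · rw [apply_inr_true u _ hs2]; rfl

lemma pp_one : pp (1 : Bgroup n) = 1 := by
  apply Equiv.ext; intro i; rfl

lemma sp_one (i : Fin n) : sp (1 : Bgroup n) i = false := rfl

lemma pp_inv (u : Bgroup n) : pp u⁻¹ = (pp u)⁻¹ := by
  have := pp_mul u⁻¹ u
  rw [inv_mul_cancel, pp_one] at this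
  exact eq_inv_of_mul_eq_one_left (by rw [← this])

lemma sp_inv (u : Bgroup n) (a : Fin n) : sp u⁻¹ a = sp u ((pp u)⁻¹ a) := by
  have h := sp_mul u⁻¹ u ((pp u)⁻¹ a)
  rw [inv_mul_cancel, sp_one] at h
  have h2 : pp u ((pp u)⁻¹ a) = a := by simp
  rw [h2] at h
  rcases h1 : sp u ((pp u)⁻¹ a) <;> rcases h3 : sp u⁻¹ a <;> simp_all

/-- reconstruct a signed permutation from parts -/
def mk' (σ : Equiv.Perm (Fin n)) (s : Fin n → Bool) : Bgroup n :=
  ⟨{ toFun := fun x => Sum.elim (fun i => if s i then Sum.inr (σ i) else Sum.inl (σ i))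
       (fun i => if s i then Sum.inl (σ i) else Sum.inr (σ i)) x
     invFun := fun x => Sum.elim (fun a => if s (σ⁻¹ a) then Sum.inr (σ⁻¹ a) else Sum.inl (σ⁻¹ a))
       (fun a => if s (σ⁻¹ a) then Sum.inl (σ⁻¹ a) else Sum.inr (σ⁻¹ a)) x
     left_inv := by
       intro x
       rcases x with i | i <;> rcases h : s i <;> simp [h]
     right_inv := by
       intro x
       rcases x with a | a <;> rcases h : s (σ⁻¹ a) <;> simp only [Equiv.Perm.inv_def] at h <;> simp [h] },
   by
     intro x
     rcases x with i | i <;> rcases h : s i <;> simp [h]⟩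

lemma pp_mk' (σ : Equiv.Perm (Fin n)) (s : Fin n → Bool) : pp (mk' σ s) = σ := by
  apply Equiv.ext
  intro i
  show av _ = _
  rcases h : s i <;> simp [mk', h, av]

lemma sp_mk' (σ : Equiv.Perm (Fin n)) (s : Fin n → Bool) : sp (mk' σ s) = s := by
  funext i
  show Sum.isRight _ = _
  rcases h : s i <;> simp [mk', h]

end BAux
namespace BAux

variable {n : ℕ}

/-- the condition defining the coset representatives, in terms of the parts -/
def cnd (j : ℕ) (σ : Equiv.Perm (Fin n)) (s : Fin n → Bool) : Prop :=
  (∀ i : Fin n, (i : ℕ) < j → s i = false) ∧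
  ∀ a b : Fin n, a < b → (b : ℕ) < j → σ a < σ b

lemma bvalOf_eq_false (u : Bgroup n) (i : ℕ) (h1 : 1 ≤ i) (h2 : i ≤ n)
    (hs : sp u ⟨i - 1, by omega⟩ = false) :
    bvalOf n ↑u i = ((pp u ⟨i - 1, by omega⟩ : ℕ) : ℤ) + 1 := by
  unfold bvalOf
  rw [dif_pos ⟨h1, h2⟩, apply_inl_false u _ hs]
  simp [bval]

lemma bvalOf_eq_true (u : Bgroup n) (i : ℕ) (h1 : 1 ≤ i) (h2 : i ≤ n)
    (hs : sp u ⟨i - 1, by omega⟩ = true) :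
    bvalOf n ↑u i = -((pp u ⟨i - 1, by omega⟩ : ℕ) : ℤ) - 1 := by
  unfold bvalOf
  rw [dif_pos ⟨h1, h2⟩, apply_inl_true u _ hs]
  simp [bval]
  ring

lemma bvalOf_zero (u : Bgroup n) : bvalOf n ↑u 0 = 0 := by
  unfold bvalOf
  rw [dif_neg (by omega)]

lemma mem_iff (j : ℕ) (hj : j ≤ n) (u : Bgroup n) :
    (∀ i : ℕ, 1 ≤ i → i ≤ j →
        bvalOf n (u : Equiv.Perm (Fin n ⊕ Fin n)) (i - 1) <
          bvalOf n (u : Equiv.Perm (Fin n ⊕ Fin n)) i) ↔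
      cnd j (pp u) (sp u) := by
  constructor
  · intro H
    have pos : ∀ i : ℕ, 1 ≤ i → i ≤ j → 0 < bvalOf n ↑u i := by
      intro i
      induction i with
      | zero => omega
      | succ m ih =>
        intro _ hle
        rcases Nat.eq_zero_or_pos m with rfl | hm
        · have h := H 1 le_rfl (by omega)
          rwa [show (1 : ℕ) - 1 = 0 from rfl, bvalOf_zero] at h
        · have h1 := H (m + 1) (by omega) hle
          have h2 := ih (by omega) (by omega)
          rw [show m + 1 - 1 = m from rfl] at h1
          omega
    have hsgn : ∀ i : Fin n, (i : ℕ) < j → sp u i = false := by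
      intro i hi
      rcases h : sp u i with _ | _
      · rfl
      · exfalso
        have hp := pos ((i : ℕ) + 1) (by omega) (by omega)
        have h' : sp u ⟨(i : ℕ) + 1 - 1, by omega⟩ = true := by
          convert h using 2
          exact Fin.ext (by simp)
        rw [bvalOf_eq_true u _ (by omega) (by omega) h'] at hp
        omega
    refine ⟨hsgn, ?_⟩
    have chain : ∀ d p q : ℕ, q = p + d → 1 ≤ p → q ≤ j → p < q →
        bvalOf n ↑u p < bvalOf n ↑u q := by
      intro d
      induction d with
      | zero => omega
      | succ m ih =>
        intro p q hq h1 hqj hpq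
        rcases Nat.eq_zero_or_pos m with rfl | hm
        · have h := H q (by omega) hqj
          rwa [show q - 1 = p by omega] at h
        · have h2 := H q (by omega) hqj
          have h3 := ih p (q - 1) (by omega) h1 (by omega) (by omega)
          omega
    intro a b hab hbj
    have h := chain ((b : ℕ) - (a : ℕ)) ((a : ℕ) + 1) ((b : ℕ) + 1)
      (by have := Fin.lt_def.mp hab; omega) (by omega) (by omega)
      (by have := Fin.lt_def.mp hab; omega)
    have ha : sp u ⟨(a : ℕ) + 1 - 1, by omega⟩ = false := by
      have := hsgn a (by have := Fin.lt_def.mp hab; omega)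
      convert this using 2
      exact Fin.ext (by simp)
    have hb : sp u ⟨(b : ℕ) + 1 - 1, by omega⟩ = false := by
      have := hsgn b hbj
      convert this using 2
      exact Fin.ext (by simp)
    rw [bvalOf_eq_false u _ (by omega) (by omega) ha,
      bvalOf_eq_false u _ (by omega) (by omega) hb] at h
    have ha2 : (⟨(a : ℕ) + 1 - 1, by omega⟩ : Fin n) = a := Fin.ext (by simp)
    have hb2 : (⟨(b : ℕ) + 1 - 1, by omega⟩ : Fin n) = b := Fin.ext (by simp)
    rw [ha2, hb2] at h
    rw [Fin.lt_def]
    omega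
  · rintro ⟨hsgn, hmono⟩ i h1 hij
    have hin : i ≤ n := le_trans hij hj
    have hsf : sp u ⟨i - 1, by omega⟩ = false := hsgn _ (by show i - 1 < j; omega)
    rw [bvalOf_eq_false u i h1 hin hsf]
    rcases Nat.lt_or_ge i 2 with h2 | h2
    · have : i = 1 := by omega
      subst this
      have h0 : bvalOf n (u : Equiv.Perm (Fin n ⊕ Fin n)) (1 - 1) = 0 := bvalOf_zero u
      rw [h0]
      positivity
    · have hsf2 : sp u ⟨i - 1 - 1, by omega⟩ = false := hsgn _ (by show i - 1 - 1 < j; omega)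
      rw [bvalOf_eq_false u (i-1) (by omega) (by omega) hsf2]
      have := hmono ⟨i - 1 - 1, by omega⟩ ⟨i - 1, by omega⟩
        (by rw [Fin.lt_def]; show i - 1 - 1 < i - 1; omega) (by show i - 1 < j; omega)
      rw [Fin.lt_def] at this
      omega

end BAux
noncomputable def xB (n j : ℕ) : MonoidAlgebra ℚ (Bgroup n) :=
  ∑ w ∈ Finset.univ.filter
      (fun w : Bgroup n =>
        ∀ i : ℕ, 1 ≤ i → i ≤ j → bvalOf n (w : Equiv.Perm (Fin n ⊕ Fin n)) (i - 1) <
          bvalOf n (w : Equiv.Perm (Fin n ⊕ Fin n)) i),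
    MonoidAlgebra.single w 1

namespace BAux

variable {n : ℕ}

/-- the index finset of `xB` -/
noncomputable def FB (n j : ℕ) : Finset (Bgroup n) :=
  Finset.univ.filter
      (fun w : Bgroup n =>
        ∀ i : ℕ, 1 ≤ i → i ≤ j → bvalOf n (w : Equiv.Perm (Fin n ⊕ Fin n)) (i - 1) <
          bvalOf n (w : Equiv.Perm (Fin n ⊕ Fin n)) i)

lemma xB_eq (n j : ℕ) : xB n j = ∑ w ∈ FB n j, MonoidAlgebra.single w 1 := rfl

lemma mem_FB_iff {j : ℕ} (hj : j ≤ n) (u : Bgroup n) :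
    u ∈ FB n j ↔ cnd j (pp u) (sp u) := by
  rw [FB, Finset.mem_filter]
  simp only [Finset.mem_univ, true_and]
  exact mem_iff j hj u

/-- the number of `i < k` such that `p.1⁻¹ (γ i) < j` -/
noncomputable def Lfun (j k : ℕ) (γ : Equiv.Perm (Fin n)) (p : Equiv.Perm (Fin n) × (Fin n → Bool)) : ℕ :=
  (Finset.univ.filter (fun i : Fin n => (i : ℕ) < k ∧ ((p.1⁻¹ (γ i) : Fin n) : ℕ) < j)).card

/-- target coefficient -/
def coefB (n j k l : ℕ) : ℕ :=
  (n - j).choose (k - l) * (n - k).choose (j - l) * Nat.factorial (n + l - j - k) *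
    2 ^ (n + l - j - k)

/-- the set of pairs (σ, s) satisfying both coset conditions -/
noncomputable def UB (n j k : ℕ) (γ : Equiv.Perm (Fin n)) (e : Fin n → Bool) :
    Finset (Equiv.Perm (Fin n) × (Fin n → Bool)) :=
  Finset.univ.filter (fun p =>
    cnd j p.1 p.2 ∧ cnd k (p.1⁻¹ * γ) (fun i => xor (e i) (p.2 (p.1⁻¹ (γ i)))))

end BAux

namespace BAux
open Finset

variable {n : ℕ}

lemma card_filter_lt (m : ℕ) (hm : m ≤ n) :
    (Finset.univ.filter fun i : Fin n => (i : ℕ) < m).card = m := by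
  have h : (Finset.univ.filter fun i : Fin n => (i : ℕ) < m).card = (Finset.range m).card := by
    apply Finset.card_bij (fun (i : Fin n) _ => (i : ℕ))
    · intro a ha
      rw [Finset.mem_filter] at ha
      rw [Finset.mem_range]
      exact ha.2
    · intro a ha b hb h
      exact Fin.ext h
    · intro b hb
      rw [Finset.mem_range] at hb
      exact ⟨⟨b, by omega⟩, Finset.mem_filter.mpr ⟨Finset.mem_univ _, hb⟩, rfl⟩
  rw [h, Finset.card_range]

lemma card_filter_ge_lt (a b : ℕ) (hb : b ≤ n) :
    (Finset.univ.filter fun i : Fin n => a ≤ (i : ℕ) ∧ (i : ℕ) < b).card = b - a := by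
  rcases le_or_gt a b with hab | hab
  · have h : (Finset.univ.filter fun i : Fin n => a ≤ (i : ℕ) ∧ (i : ℕ) < b).card
        = (Finset.range (b - a)).card := by
      apply Finset.card_bij (fun (i : Fin n) _ => (i : ℕ) - a)
      · intro x hx
        rw [Finset.mem_filter] at hx
        rw [Finset.mem_range]
        omega
      · intro x hx y hy h
        rw [Finset.mem_filter] at hx hy
        exact Fin.ext (by omega)
      · intro c hc
        rw [Finset.mem_range] at hc
        exact ⟨⟨a + c, by omega⟩, Finset.mem_filter.mpr ⟨Finset.mem_univ _, by simp; omega⟩,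
          by simp⟩
    rw [h, Finset.card_range]
  · rw [show b - a = 0 by omega, Finset.card_eq_zero, Finset.eq_empty_iff_forall_notMem]
    intro x hx
    rw [Finset.mem_filter] at hx
    omega

lemma card_filter_ge (a : ℕ) (ha : a ≤ n) :
    (Finset.univ.filter fun i : Fin n => a ≤ (i : ℕ)).card = n - a := by
  have h : (Finset.univ.filter fun i : Fin n => a ≤ (i : ℕ))
      = (Finset.univ.filter fun i : Fin n => a ≤ (i : ℕ) ∧ (i : ℕ) < n) := by
    apply Finset.filter_congr
    intro i _
    simp [i.isLt]
  rw [h, card_filter_ge_lt a n le_rfl]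

/-- the image of an index interval under γ -/
noncomputable def GammaSet (γ : Equiv.Perm (Fin n)) (a b : ℕ) : Finset (Fin n) :=
  (Finset.univ.filter fun i : Fin n => a ≤ (i : ℕ) ∧ (i : ℕ) < b).image γ

lemma card_GammaSet (γ : Equiv.Perm (Fin n)) (a b : ℕ) (hb : b ≤ n) :
    (GammaSet γ a b).card = b - a := by
  rw [GammaSet, Finset.card_image_of_injective _ γ.injective, card_filter_ge_lt a b hb]

lemma mem_GammaSet_iff (γ : Equiv.Perm (Fin n)) (a b : ℕ) (x : Fin n) :
    x ∈ GammaSet γ a b ↔ a ≤ ((γ⁻¹ x : Fin n) : ℕ) ∧ ((γ⁻¹ x : Fin n) : ℕ) < b := by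
  rw [GammaSet, Finset.mem_image]
  constructor
  · rintro ⟨i, hi, rfl⟩
    rw [Finset.mem_filter] at hi
    simpa using hi.2
  · intro h
    exact ⟨γ⁻¹ x, Finset.mem_filter.mpr ⟨Finset.mem_univ _, h⟩, by simp⟩

end BAux

namespace BAux
open Finset

variable {n : ℕ}

section Struct

variable {j k l : ℕ} {γ : Equiv.Perm (Fin n)} {e : Fin n → Bool}
  {p : Equiv.Perm (Fin n) × (Fin n → Bool)}

lemma mem_UB_iff :
    p ∈ UB n j k γ e ↔ cnd j p.1 p.2 ∧
      cnd k (p.1⁻¹ * γ) (fun i => xor (e i) (p.2 (p.1⁻¹ (γ i)))) := by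
  rw [UB, Finset.mem_filter]
  simp

lemma tau_apply (i : Fin n) : (p.1⁻¹ * γ) i = p.1⁻¹ (γ i) := rfl

/-- S1: the initial-segment property of the window indices -/
lemma struct1 (hj : j ≤ n) (hk : k ≤ n) (hp : p ∈ UB n j k γ e)
    (hL : Lfun j k γ p = l) (hl : l ≤ min j k) :
    ∀ i : Fin n, ((i : ℕ) < k ∧ ((p.1⁻¹ (γ i) : Fin n) : ℕ) < j) ↔ (i : ℕ) < l := by
  obtain ⟨hpj, hpk⟩ := mem_UB_iff.mp hp
  set D := Finset.univ.filter
    (fun i : Fin n => (i : ℕ) < k ∧ ((p.1⁻¹ (γ i) : Fin n) : ℕ) < j) with hD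
  have hDcard : D.card = l := hL
  have down : ∀ i i' : Fin n, i' ≤ i → i ∈ D → i' ∈ D := by
    intro i i' hle hi
    rw [hD, Finset.mem_filter] at hi ⊢
    refine ⟨Finset.mem_univ _, by omega, ?_⟩
    rcases eq_or_lt_of_le hle with rfl | hlt
    · exact hi.2.2
    · have := hpk.2 i' i hlt hi.2.1
      rw [tau_apply, tau_apply, Fin.lt_def] at this
      omega
  have upper : ∀ i ∈ D, (i : ℕ) < l := by
    intro i hi
    by_contra hge
    have hsub : (Finset.univ.filter fun x : Fin n => (x : ℕ) < (i : ℕ) + 1) ⊆ D := by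
      intro x hx
      rw [Finset.mem_filter] at hx
      exact down i x (by rw [Fin.le_def]; omega) hi
    have hcard := Finset.card_le_card hsub
    rw [card_filter_lt ((i : ℕ) + 1) (by omega), hDcard] at hcard
    omega
  have hsub : D ⊆ Finset.univ.filter fun i : Fin n => (i : ℕ) < l := by
    intro x hx
    exact Finset.mem_filter.mpr ⟨Finset.mem_univ _, upper x hx⟩
  have heq : D = Finset.univ.filter fun i : Fin n => (i : ℕ) < l := by
    apply Finset.eq_of_subset_of_card_le hsub
    rw [card_filter_lt l (by omega), hDcard]
  intro i
  constructor
  · intro h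
    have : i ∈ D := by rw [hD, Finset.mem_filter]; exact ⟨Finset.mem_univ _, h⟩
    rw [heq, Finset.mem_filter] at this
    exact this.2
  · intro h
    have : i ∈ D := by
      rw [heq, Finset.mem_filter]
      exact ⟨Finset.mem_univ _, h⟩
    rw [hD, Finset.mem_filter] at this
    exact this.2

/-- S2: nonemptiness forces `cnd l γ e` -/
lemma struct2 (hj : j ≤ n) (hk : k ≤ n) (hp : p ∈ UB n j k γ e)
    (hL : Lfun j k γ p = l) (hl : l ≤ min j k) : cnd l γ e := by
  obtain ⟨hpj, hpk⟩ := mem_UB_iff.mp hp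
  have S1 := struct1 hj hk hp hL hl
  constructor
  · intro i hi
    have h1 : (i : ℕ) < k ∧ ((p.1⁻¹ (γ i) : Fin n) : ℕ) < j := (S1 i).mpr hi
    have h2 := hpk.1 i (by omega)
    have h3 : p.2 (p.1⁻¹ (γ i)) = false := hpj.1 _ h1.2
    simp only [tau_apply] at h2
    rw [h3] at h2
    simpa using h2
  · intro a b hab hb
    have ha' := (S1 a).mpr (by have := Fin.lt_def.mp hab; omega)
    have hb' := (S1 b).mpr hb
    have htau : p.1⁻¹ (γ a) < p.1⁻¹ (γ b) := by
      have := hpk.2 a b hab (by omega)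
      rwa [tau_apply, tau_apply] at this
    have := hpj.2 _ _ htau hb'.2
    simpa using this

/-- S3: nonemptiness forces `j + k ≤ n + l` -/
lemma struct3 (hj : j ≤ n) (hk : k ≤ n) (hp : p ∈ UB n j k γ e)
    (hL : Lfun j k γ p = l) (hl : l ≤ min j k) : j + k ≤ n + l := by
  have S1 := struct1 hj hk hp hL hl
  set W := Finset.univ.filter fun i : Fin n => (i : ℕ) < j with hW
  set Pd := (Finset.univ.filter fun i : Fin n => l ≤ (i : ℕ) ∧ (i : ℕ) < k).image
    (fun i => p.1⁻¹ (γ i)) with hPd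
  have hdisj : Disjoint W Pd := by
    rw [Finset.disjoint_right]
    intro x hx hxW
    rw [hPd, Finset.mem_image] at hx
    obtain ⟨i, hi, rfl⟩ := hx
    rw [Finset.mem_filter] at hi
    rw [hW, Finset.mem_filter] at hxW
    have := (S1 i).mp ⟨hi.2.2, hxW.2⟩
    omega
  have hcard : (W ∪ Pd).card = j + (k - l) := by
    rw [Finset.card_union_of_disjoint hdisj, hW, card_filter_lt j hj, hPd,
      Finset.card_image_of_injective _ (by
        intro a b hab
        exact γ.injective (p.1⁻¹.injective hab)), card_filter_ge_lt l k hk]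
  have h2 := Finset.card_le_univ (W ∪ Pd)
  rw [hcard] at h2
  simp only [Finset.card_univ, Fintype.card_fin] at h2
  omega

end Struct

/-- data extracted from a pair: extra window values -/
noncomputable def Sdata (γ : Equiv.Perm (Fin n)) (j l : ℕ)
    (p : Equiv.Perm (Fin n) × (Fin n → Bool)) : Finset (Fin n) :=
  ((Finset.univ.filter fun i : Fin n => (i : ℕ) < j).image p.1) \ GammaSet γ 0 l

/-- data extracted from a pair: positions of the latter values -/
noncomputable def Pdata (γ : Equiv.Perm (Fin n)) (l k : ℕ)
    (p : Equiv.Perm (Fin n) × (Fin n → Bool)) : Finset (Fin n) :=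
  (Finset.univ.filter fun i : Fin n => l ≤ (i : ℕ) ∧ (i : ℕ) < k).image
    (fun i => p.1⁻¹ (γ i))

end BAux

namespace BAux
open Finset

variable {n : ℕ}

/-- remaining positions -/
noncomputable def Rpos (n : ℕ) (j : ℕ) (P : Finset (Fin n)) : Finset (Fin n) :=
  (Finset.univ.filter fun i : Fin n => j ≤ (i : ℕ)) \ P

/-- remaining values -/
noncomputable def Rval (n : ℕ) (γ : Equiv.Perm (Fin n)) (k : ℕ) (S : Finset (Fin n)) :
    Finset (Fin n) :=
  Finset.univ \ (GammaSet γ 0 k ∪ S)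

/-- window values -/
noncomputable def Vset (n : ℕ) (γ : Equiv.Perm (Fin n)) (l : ℕ) (S : Finset (Fin n)) :
    Finset (Fin n) :=
  GammaSet γ 0 l ∪ S

/-- embedding of `Fin (k - l)` into `Fin n` by `r ↦ l + r` -/
def embK (l k : ℕ) (hk : k ≤ n) (r : Fin (k - l)) : Fin n :=
  ⟨l + r, by have := r.2; omega⟩

lemma embK_inj (l k : ℕ) (hk : k ≤ n) : Function.Injective (embK (n := n) l k hk) := by
  intro a b hab
  have := Fin.val_eq_of_eq hab
  simp only [embK] at this
  exact Fin.ext (by omega)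

lemma embK_val_mem (l k : ℕ) (hk : k ≤ n) (γ : Equiv.Perm (Fin n)) (r : Fin (k - l)) :
    γ (embK l k hk r) ∈ GammaSet γ l k := by
  rw [mem_GammaSet_iff]
  have : γ⁻¹ (γ (embK l k hk r)) = embK l k hk r := by simp
  rw [this]
  simp only [embK]
  have := r.2
  constructor <;> omega

section Build

variable {j k l : ℕ} {γ : Equiv.Perm (Fin n)} {e : Fin n → Bool} {S P : Finset (Fin n)}

/-- the permutation part built from choice data -/
noncomputable def bFun (γ : Equiv.Perm (Fin n)) (j k l : ℕ) (S P : Finset (Fin n))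
    (hV : (Vset n γ l S).card = j) (hP2 : P.card = k - l) (hk : k ≤ n)
    (φ : ↥(Rpos n j P) ≃ ↥(Rval n γ k S)) : Fin n → Fin n := fun i =>
  if h : (i : ℕ) < j then ((Vset n γ l S).orderIsoOfFin hV ⟨(i : ℕ), h⟩ : Fin n)
  else if h2 : i ∈ P then γ (embK l k hk ((P.orderIsoOfFin hP2).symm ⟨i, h2⟩))
  else (φ ⟨i, by rw [Rpos, Finset.mem_sdiff, Finset.mem_filter]
                 exact ⟨⟨Finset.mem_univ _, by omega⟩, h2⟩⟩ : Fin n)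

variable (hV : (Vset n γ l S).card = j) (hP2 : P.card = k - l) (hk : k ≤ n)
  (φ : ↥(Rpos n j P) ≃ ↥(Rval n γ k S))

lemma bFun_window (i : Fin n) (h : (i : ℕ) < j) :
    bFun γ j k l S P hV hP2 hk φ i = ((Vset n γ l S).orderIsoOfFin hV ⟨(i : ℕ), h⟩ : Fin n) :=
  dif_pos h

lemma bFun_P (i : Fin n) (h : ¬ (i : ℕ) < j) (h2 : i ∈ P) :
    bFun γ j k l S P hV hP2 hk φ i = γ (embK l k hk ((P.orderIsoOfFin hP2).symm ⟨i, h2⟩)) := by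
  rw [bFun, dif_neg h, dif_pos h2]

lemma mem_Rpos_of (i : Fin n) (h : ¬ (i : ℕ) < j) (h2 : i ∉ P) : i ∈ Rpos n j P := by
  rw [Rpos, Finset.mem_sdiff, Finset.mem_filter]
  exact ⟨⟨Finset.mem_univ _, by omega⟩, h2⟩

lemma bFun_R (i : Fin n) (h : ¬ (i : ℕ) < j) (h2 : i ∉ P) :
    bFun γ j k l S P hV hP2 hk φ i = (φ ⟨i, mem_Rpos_of i h h2⟩ : Fin n) := by
  rw [bFun, dif_neg h, dif_neg h2]

section Disj

variable (hl : l ≤ min j k) (hS1 : S ⊆ Finset.univ \ GammaSet γ 0 k)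

include hl hS1

lemma disj1 : Disjoint (Vset n γ l S) (GammaSet γ l k) := by
  rw [Finset.disjoint_left]
  intro x hx hx2
  rw [Vset, Finset.mem_union] at hx
  rw [mem_GammaSet_iff] at hx2
  rcases hx with hx | hx
  · rw [mem_GammaSet_iff] at hx
    omega
  · have := hS1 hx
    rw [Finset.mem_sdiff] at this
    apply this.2
    rw [mem_GammaSet_iff]
    omega

lemma disj2 : Disjoint (Vset n γ l S) (Rval n γ k S) := by
  rw [Finset.disjoint_left]
  intro x hx hx2
  rw [Vset, Finset.mem_union] at hx
  rw [Rval, Finset.mem_sdiff, Finset.mem_union] at hx2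
  rcases hx with hx | hx
  · rw [mem_GammaSet_iff] at hx
    exact hx2.2 (Or.inl (by rw [mem_GammaSet_iff]; omega))
  · exact hx2.2 (Or.inr hx)

lemma disj3 : Disjoint (GammaSet γ l k) (Rval n γ k S) := by
  rw [Finset.disjoint_left]
  intro x hx hx2
  rw [mem_GammaSet_iff] at hx
  rw [Rval, Finset.mem_sdiff, Finset.mem_union] at hx2
  exact hx2.2 (Or.inl (by rw [mem_GammaSet_iff]; omega))

lemma bFun_inj : Function.Injective (bFun γ j k l S P hV hP2 hk φ) := by
  intro a b hab
  have d1 := disj1 (n := n) (j := j) hl hS1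
  have d2 := disj2 (n := n) (j := j) hl hS1
  have d3 := disj3 (n := n) (j := j) hl hS1
  by_cases ha : (a : ℕ) < j
  · rw [bFun_window hV hP2 hk φ a ha] at hab
    by_cases hb : (b : ℕ) < j
    · rw [bFun_window hV hP2 hk φ b hb] at hab
      have := ((Vset n γ l S).orderIsoOfFin hV).injective (Subtype.ext hab)
      have := Fin.val_eq_of_eq this
      exact Fin.ext this
    · exfalso
      by_cases hb2 : b ∈ P
      · rw [bFun_P hV hP2 hk φ b hb hb2] at hab
        have m1 : γ (embK l k hk ((P.orderIsoOfFin hP2).symm ⟨b, hb2⟩)) ∈ Vset n γ l S := by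
          rw [← hab]; exact Finset.coe_mem _
        exact Finset.disjoint_left.mp d1 m1 (embK_val_mem l k hk γ _)
      · rw [bFun_R hV hP2 hk φ b hb hb2] at hab
        have m1 : (φ ⟨b, mem_Rpos_of b hb hb2⟩ : Fin n) ∈ Vset n γ l S := by
          rw [← hab]; exact Finset.coe_mem _
        exact Finset.disjoint_left.mp d2 m1 (Finset.coe_mem _)
  · by_cases ha2 : a ∈ P
    · rw [bFun_P hV hP2 hk φ a ha ha2] at hab
      by_cases hb : (b : ℕ) < j
      · exfalso
        rw [bFun_window hV hP2 hk φ b hb] at hab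
        have m1 : γ (embK l k hk ((P.orderIsoOfFin hP2).symm ⟨a, ha2⟩)) ∈ Vset n γ l S := by
          rw [hab]; exact Finset.coe_mem _
        exact Finset.disjoint_left.mp d1 m1 (embK_val_mem l k hk γ _)
      · by_cases hb2 : b ∈ P
        · rw [bFun_P hV hP2 hk φ b hb hb2] at hab
          have h1 := embK_inj l k hk (γ.injective hab)
          have h2 := (P.orderIsoOfFin hP2).symm.injective h1
          have := congrArg Subtype.val h2
          exact this
        · exfalso
          rw [bFun_R hV hP2 hk φ b hb hb2] at hab
          have m1 : (φ ⟨b, mem_Rpos_of b hb hb2⟩ : Fin n) ∈ GammaSet γ l k := by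
            rw [← hab]; exact embK_val_mem l k hk γ _
          exact Finset.disjoint_left.mp d3 m1 (Finset.coe_mem _)
    · rw [bFun_R hV hP2 hk φ a ha ha2] at hab
      by_cases hb : (b : ℕ) < j
      · exfalso
        rw [bFun_window hV hP2 hk φ b hb] at hab
        have m1 : (φ ⟨a, mem_Rpos_of a ha ha2⟩ : Fin n) ∈ Vset n γ l S := by
          rw [hab]; exact Finset.coe_mem _
        exact Finset.disjoint_left.mp d2 m1 (Finset.coe_mem _)
      · by_cases hb2 : b ∈ P
        · exfalso
          rw [bFun_P hV hP2 hk φ b hb hb2] at hab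
          have m1 : (φ ⟨a, mem_Rpos_of a ha ha2⟩ : Fin n) ∈ GammaSet γ l k := by
            rw [hab]; exact embK_val_mem l k hk γ _
          exact Finset.disjoint_left.mp d3 m1 (Finset.coe_mem _)
        · rw [bFun_R hV hP2 hk φ b hb hb2] at hab
          have := φ.injective (Subtype.ext hab)
          have := congrArg Subtype.val this
          exact this

/-- the permutation built from choice data -/
noncomputable def bPerm : Equiv.Perm (Fin n) :=
  Equiv.ofBijective _ (Finite.injective_iff_bijective.mp (bFun_inj hV hP2 hk φ hl hS1))

lemma bPerm_apply (i : Fin n) :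
    bPerm hV hP2 hk φ hl hS1 i = bFun γ j k l S P hV hP2 hk φ i := rfl

end Disj

/-- the sign part built from choice data -/
noncomputable def bSign (e : Fin n → Bool) (sg : ↥(Rpos n j P) → Bool) : Fin n → Bool := fun i =>
  if h : (i : ℕ) < j then false
  else if h2 : i ∈ P then e (embK l k hk ((P.orderIsoOfFin hP2).symm ⟨i, h2⟩))
  else sg ⟨i, mem_Rpos_of i h h2⟩

lemma bSign_window (e : Fin n → Bool) (sg : ↥(Rpos n j P) → Bool) (i : Fin n)
    (h : (i : ℕ) < j) : bSign hP2 hk e sg i = false := dif_pos h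

lemma bSign_P (e : Fin n → Bool) (sg : ↥(Rpos n j P) → Bool) (i : Fin n)
    (h : ¬ (i : ℕ) < j) (h2 : i ∈ P) :
    bSign hP2 hk e sg i = e (embK l k hk ((P.orderIsoOfFin hP2).symm ⟨i, h2⟩)) := by
  rw [bSign, dif_neg h, dif_pos h2]

lemma bSign_R (e : Fin n → Bool) (sg : ↥(Rpos n j P) → Bool) (i : Fin n)
    (h : ¬ (i : ℕ) < j) (h2 : i ∉ P) :
    bSign hP2 hk e sg i = sg ⟨i, mem_Rpos_of i h h2⟩ := by
  rw [bSign, dif_neg h, dif_neg h2]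

end Build

end BAux

namespace BAux
open Finset

variable {n : ℕ}

section Verify

variable {j k l : ℕ} {γ : Equiv.Perm (Fin n)} {e : Fin n → Bool} {S P : Finset (Fin n)}
  (hV : (Vset n γ l S).card = j) (hP2 : P.card = k - l) (hk : k ≤ n)
  (φ : ↥(Rpos n j P) ≃ ↥(Rval n γ k S))
  (hl : l ≤ min j k) (hS1 : S ⊆ Finset.univ \ GammaSet γ 0 k)


lemma gamma_mem_Vset (i : Fin n) (hi : (i : ℕ) < l) : γ i ∈ Vset n γ l S := by
  rw [Vset, Finset.mem_union]
  left
  rw [mem_GammaSet_iff]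
  simp
  omega

lemma not_lt_of_memP (hP1 : P ⊆ Finset.univ.filter fun i : Fin n => j ≤ (i : ℕ))
    (i : Fin n) (hi : i ∈ P) : ¬ (i : ℕ) < j := by
  have := hP1 hi
  rw [Finset.mem_filter] at this
  omega

lemma not_lt_of_mem_Rpos (i : Fin n) (hi : i ∈ Rpos n j P) : ¬ (i : ℕ) < j ∧ i ∉ P := by
  rw [Rpos, Finset.mem_sdiff, Finset.mem_filter] at hi
  exact ⟨by omega, hi.2⟩

/-- value at a P position -/
lemma bPerm_P_apply (hP1 : P ⊆ Finset.univ.filter fun i : Fin n => j ≤ (i : ℕ))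
    (r : Fin (k - l)) :
    bPerm hV hP2 hk φ hl hS1 ((P.orderIsoOfFin hP2 r : Fin n)) = γ (embK l k hk r) := by
  rw [bPerm_apply, bFun_P hV hP2 hk φ _ (not_lt_of_memP hP1 _ (Finset.coe_mem _))
    (Finset.coe_mem _)]
  congr 1
  have : (⟨((P.orderIsoOfFin hP2) r : Fin n), Finset.coe_mem _⟩ : ↥P) = (P.orderIsoOfFin hP2) r :=
    Subtype.ext rfl
  rw [this, OrderIso.symm_apply_apply]

/-- value at a remaining position -/
lemma bPerm_R_apply (x : ↥(Rpos n j P)) :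
    bPerm hV hP2 hk φ hl hS1 x.1 = (φ x : Fin n) := by
  obtain ⟨h1, h2⟩ := not_lt_of_mem_Rpos x.1 x.2
  rw [bPerm_apply, bFun_R hV hP2 hk φ _ h1 h2]

/-- inverse value: small indices -/
lemma bPerm_inv_lt (hjn : j ≤ n) (i : Fin n) (hi : (i : ℕ) < l) :
    (bPerm hV hP2 hk φ hl hS1)⁻¹ (γ i) =
      ⟨(((Vset n γ l S).orderIsoOfFin hV).symm ⟨γ i, gamma_mem_Vset i hi⟩ : ℕ), by
        have := (((Vset n γ l S).orderIsoOfFin hV).symm ⟨γ i, gamma_mem_Vset i hi⟩).2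
        omega⟩ := by
  rw [Equiv.Perm.inv_eq_iff_eq]
  set r := ((Vset n γ l S).orderIsoOfFin hV).symm ⟨γ i, gamma_mem_Vset i hi⟩ with hr
  have h2 : ((⟨(r : ℕ), by have := r.2; omega⟩ : Fin n) : ℕ) < j := r.2
  rw [bPerm_apply, bFun_window hV hP2 hk φ _ h2]
  have h3 : (⟨((⟨(r : ℕ), by have := r.2; omega⟩ : Fin n) : ℕ), h2⟩ : Fin j) = r :=
    Fin.ext rfl
  rw [h3, hr, OrderIso.apply_symm_apply]

/-- inverse value: middle indices -/
lemma bPerm_inv_mid (hP1 : P ⊆ Finset.univ.filter fun i : Fin n => j ≤ (i : ℕ))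
    (i : Fin n) (hi1 : l ≤ (i : ℕ)) (hi2 : (i : ℕ) < k) :
    (bPerm hV hP2 hk φ hl hS1)⁻¹ (γ i) =
      ((P.orderIsoOfFin hP2 ⟨(i : ℕ) - l, by omega⟩ : Fin n)) := by
  rw [Equiv.Perm.inv_eq_iff_eq, bPerm_P_apply hV hP2 hk φ hl hS1 hP1]
  congr 1
  exact Fin.ext (by simp [embK]; omega)

/-- inverse value: remaining values -/
lemma bPerm_inv_R (x : ↥(Rpos n j P)) :
    (bPerm hV hP2 hk φ hl hS1)⁻¹ (φ x : Fin n) = x.1 := by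
  rw [Equiv.Perm.inv_eq_iff_eq, bPerm_R_apply]

/-- C1 : the window condition for the built pair -/
lemma build_cnd1 (sg : ↥(Rpos n j P) → Bool) :
    cnd j (bPerm hV hP2 hk φ hl hS1) (bSign hP2 hk e sg) := by
  constructor
  · intro i hi
    exact bSign_window hP2 hk e sg i hi
  · intro a b hab hb
    have ha : (a : ℕ) < j := by have := Fin.lt_def.mp hab; omega
    rw [bPerm_apply, bPerm_apply, bFun_window hV hP2 hk φ a ha,
      bFun_window hV hP2 hk φ b hb]
    have : (⟨(a : ℕ), ha⟩ : Fin j) < ⟨(b : ℕ), hb⟩ := by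
      rw [Fin.lt_def]
      exact Fin.lt_def.mp hab
    have := ((Vset n γ l S).orderIsoOfFin hV).strictMono this
    exact this

/-- C2 : the second condition for the built pair -/
lemma build_cnd2 (hjn : j ≤ n) (hP1 : P ⊆ Finset.univ.filter fun i : Fin n => j ≤ (i : ℕ))
    (sg : ↥(Rpos n j P) → Bool) (hc : cnd l γ e) :
    cnd k ((bPerm hV hP2 hk φ hl hS1)⁻¹ * γ)
      (fun i => xor (e i) ((bSign hP2 hk e sg) ((bPerm hV hP2 hk φ hl hS1)⁻¹ (γ i)))) := by
  constructor
  · intro i hi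
    show (e i ^^ bSign hP2 hk e sg ((bPerm hV hP2 hk φ hl hS1)⁻¹ (γ i))) = false
    by_cases hil : (i : ℕ) < l
    · rw [bPerm_inv_lt hV hP2 hk φ hl hS1 hjn i hil]
      have h1 := hc.1 i hil
      rw [bSign_window hP2 hk e sg _ (by
        exact (((Vset n γ l S).orderIsoOfFin hV).symm ⟨γ i, gamma_mem_Vset i hil⟩).2)]
      rw [h1]
      rfl
    · rw [bPerm_inv_mid hV hP2 hk φ hl hS1 hP1 i (by omega) hi]
      set r : Fin (k - l) := ⟨(i : ℕ) - l, by omega⟩ with hr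
      rw [bSign_P hP2 hk e sg _ (not_lt_of_memP hP1 _ (Finset.coe_mem _)) (Finset.coe_mem _)]
      have h3 : (⟨((P.orderIsoOfFin hP2) r : Fin n), Finset.coe_mem _⟩ : ↥P)
          = (P.orderIsoOfFin hP2) r := Subtype.ext rfl
      rw [h3, OrderIso.symm_apply_apply]
      have h4 : embK l k hk r = i := Fin.ext (by show l + ((i : ℕ) - l) = (i : ℕ); omega)
      rw [h4]
      simp
  · intro a b hab hb
    rw [Equiv.Perm.mul_apply, Equiv.Perm.mul_apply]
    by_cases hbl : (b : ℕ) < l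
    · have hal : (a : ℕ) < l := by have := Fin.lt_def.mp hab; omega
      rw [bPerm_inv_lt hV hP2 hk φ hl hS1 hjn a hal, bPerm_inv_lt hV hP2 hk φ hl hS1 hjn b hbl]
      rw [Fin.lt_def]
      simp only [Fin.val_mk]
      have hlt : (⟨γ a, gamma_mem_Vset a hal⟩ : ↥(Vset n γ l S))
          < ⟨γ b, gamma_mem_Vset b hbl⟩ := by
        rw [Subtype.mk_lt_mk]
        exact hc.2 a b hab hbl
      have := ((Vset n γ l S).orderIsoOfFin hV).symm.strictMono hlt
      exact this
    · by_cases hal : (a : ℕ) < l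
      · rw [bPerm_inv_lt hV hP2 hk φ hl hS1 hjn a hal,
          bPerm_inv_mid hV hP2 hk φ hl hS1 hP1 b (by omega) hb]
        rw [Fin.lt_def]
        have h1 := (((Vset n γ l S).orderIsoOfFin hV).symm ⟨γ a, gamma_mem_Vset a hal⟩).2
        have h2 := hP1 (Finset.coe_mem ((P.orderIsoOfFin hP2) ⟨(b : ℕ) - l, by omega⟩))
        rw [Finset.mem_filter] at h2
        simp only [Fin.val_mk]
        omega
      · rw [bPerm_inv_mid hV hP2 hk φ hl hS1 hP1 a (by omega) (by have := Fin.lt_def.mp hab; omega),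
          bPerm_inv_mid hV hP2 hk φ hl hS1 hP1 b (by omega) hb]
        have hlt : (⟨(a : ℕ) - l, by have := Fin.lt_def.mp hab; omega⟩ : Fin (k - l))
            < ⟨(b : ℕ) - l, by omega⟩ := by
          rw [Fin.lt_def]
          have := Fin.lt_def.mp hab
          simp only [Fin.val_mk]
          omega
        have := (P.orderIsoOfFin hP2).strictMono hlt
        exact this

end Verify

end BAux

namespace BAux
open Finset

variable {n : ℕ}

section Verify2

variable {j k l : ℕ} {γ : Equiv.Perm (Fin n)} {e : Fin n → Bool} {S P : Finset (Fin n)}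
  (hV : (Vset n γ l S).card = j) (hP2 : P.card = k - l) (hk : k ≤ n)
  (φ : ↥(Rpos n j P) ≃ ↥(Rval n γ k S))
  (hl : l ≤ min j k) (hS1 : S ⊆ Finset.univ \ GammaSet γ 0 k)

/-- C3 : the built pair has the right `Lfun` -/
lemma build_Lfun (hjn : j ≤ n) (hP1 : P ⊆ Finset.univ.filter fun i : Fin n => j ≤ (i : ℕ))
    (sg : ↥(Rpos n j P) → Bool) :
    Lfun j k γ (bPerm hV hP2 hk φ hl hS1, bSign hP2 hk e sg) = l := by
  rw [Lfun]
  have heq : (Finset.univ.filter (fun i : Fin n => (i : ℕ) < k ∧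
      (((bPerm hV hP2 hk φ hl hS1, bSign hP2 hk e sg).1⁻¹ (γ i) : Fin n) : ℕ) < j))
      = Finset.univ.filter fun i : Fin n => (i : ℕ) < l := by
    apply Finset.filter_congr
    intro i _
    simp only [eq_iff_iff]
    constructor
    · rintro ⟨hik, hij⟩
      by_contra hge
      rw [bPerm_inv_mid hV hP2 hk φ hl hS1 hP1 i (by omega) hik] at hij
      have h2 := hP1 (Finset.coe_mem ((P.orderIsoOfFin hP2) ⟨(i : ℕ) - l, by omega⟩))
      rw [Finset.mem_filter] at h2
      omega
    · intro hil
      refine ⟨by omega, ?_⟩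
      rw [bPerm_inv_lt hV hP2 hk φ hl hS1 hjn i hil]
      exact (((Vset n γ l S).orderIsoOfFin hV).symm ⟨γ i, gamma_mem_Vset i hil⟩).2
  rw [heq, card_filter_lt l (by omega)]

lemma window_image : (Finset.univ.filter fun i : Fin n => (i : ℕ) < j).image
    (bPerm hV hP2 hk φ hl hS1) = Vset n γ l S := by
  apply Finset.eq_of_subset_of_card_le
  · intro x hx
    rw [Finset.mem_image] at hx
    obtain ⟨i, hi, rfl⟩ := hx
    rw [Finset.mem_filter] at hi
    rw [bPerm_apply, bFun_window hV hP2 hk φ i hi.2]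
    exact Finset.coe_mem _
  · rw [Finset.card_image_of_injective _ (bPerm hV hP2 hk φ hl hS1).injective,
      card_filter_lt j (by
        have h2 := Finset.card_le_univ (Vset n γ l S)
        rw [hV] at h2
        simpa using h2), hV]

lemma disjGS (hS1' : S ⊆ Finset.univ \ GammaSet γ 0 k) (hlk : l ≤ k) :
    Disjoint (GammaSet γ 0 l) S := by
  rw [Finset.disjoint_left]
  intro x hx hxS
  have := hS1' hxS
  rw [Finset.mem_sdiff] at this
  apply this.2
  rw [mem_GammaSet_iff] at hx ⊢
  omega

/-- C4 : the built pair has the right `Sdata` -/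
lemma build_Sdata (sg : ↥(Rpos n j P) → Bool) :
    Sdata γ j l (bPerm hV hP2 hk φ hl hS1, bSign hP2 hk e sg) = S := by
  rw [Sdata]
  show ((Finset.univ.filter fun i : Fin n => (i : ℕ) < j).image
    (bPerm hV hP2 hk φ hl hS1)) \ GammaSet γ 0 l = S
  rw [window_image hV hP2 hk φ hl hS1, Vset,
    Finset.union_sdiff_cancel_left (disjGS (k := k) hS1 (by omega))]

/-- C5 : the built pair has the right `Pdata` -/
lemma build_Pdata (hjn : j ≤ n) (hP1 : P ⊆ Finset.univ.filter fun i : Fin n => j ≤ (i : ℕ))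
    (sg : ↥(Rpos n j P) → Bool) :
    Pdata γ l k (bPerm hV hP2 hk φ hl hS1, bSign hP2 hk e sg) = P := by
  rw [Pdata]
  apply Finset.eq_of_subset_of_card_le
  · intro x hx
    rw [Finset.mem_image] at hx
    obtain ⟨i, hi, rfl⟩ := hx
    rw [Finset.mem_filter] at hi
    show (bPerm hV hP2 hk φ hl hS1)⁻¹ (γ i) ∈ P
    rw [bPerm_inv_mid hV hP2 hk φ hl hS1 hP1 i hi.2.1 hi.2.2]
    exact Finset.coe_mem _
  · rw [Finset.card_image_of_injective _ (fun a b hab => by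
      exact γ.injective ((bPerm hV hP2 hk φ hl hS1)⁻¹.injective hab)),
      card_filter_ge_lt l k hk, hP2]

/-- cardinality of remaining positions -/
lemma card_Rpos (hjn : j ≤ n) (hP1 : P ⊆ Finset.univ.filter fun i : Fin n => j ≤ (i : ℕ))
    (hP2' : P.card = k - l) (hjk : j + k ≤ n + l) (hlk : l ≤ k) :
    (Rpos n j P).card = n + l - j - k := by
  rw [Rpos, Finset.card_sdiff_of_subset hP1, card_filter_ge j hjn, hP2']
  omega

/-- cardinality of remaining values -/
lemma card_Rval (hjn : j ≤ n) (hk' : k ≤ n) (hjk : j + k ≤ n + l)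
    (hS1' : S ⊆ Finset.univ \ GammaSet γ 0 k) (hS2 : S.card = j - l) (hlj : l ≤ j) :
    (Rval n γ k S).card = n + l - j - k := by
  have hdisj : Disjoint (GammaSet γ 0 k) S := by
    rw [Finset.disjoint_right]
    intro x hx hx2
    have := hS1' hx
    rw [Finset.mem_sdiff] at this
    exact this.2 hx2
  rw [Rval, Finset.card_sdiff_of_subset (Finset.subset_univ _),
    Finset.card_union_of_disjoint hdisj, card_GammaSet γ 0 k hk', hS2,
    Finset.card_univ, Fintype.card_fin]
  omega

end Verify2

end BAux

namespace BAux
open Finset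

variable {n : ℕ}

section Uniq

variable {j k l : ℕ} {γ : Equiv.Perm (Fin n)} {e : Fin n → Bool} {S P : Finset (Fin n)}
  {p : Equiv.Perm (Fin n) × (Fin n → Bool)}

/-- U1: the window image is determined -/
lemma window_image_eq (hj : j ≤ n) (hk : k ≤ n) (hp : p ∈ UB n j k γ e)
    (hL : Lfun j k γ p = l) (hl : l ≤ min j k) (hSd : Sdata γ j l p = S) :
    (Finset.univ.filter fun i : Fin n => (i : ℕ) < j).image p.1 = Vset n γ l S := by
  have S1 := struct1 hj hk hp hL hl
  have hsub : GammaSet γ 0 l ⊆ (Finset.univ.filter fun i : Fin n => (i : ℕ) < j).image p.1 := by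
    intro x hx
    rw [mem_GammaSet_iff] at hx
    have h1 := (S1 (γ⁻¹ x)).mpr (by omega)
    rw [Finset.mem_image]
    refine ⟨p.1⁻¹ (γ (γ⁻¹ x)), Finset.mem_filter.mpr ⟨Finset.mem_univ _, ?_⟩, by simp⟩
    have hγ : γ (γ⁻¹ x) = x := by simp
    rw [hγ]
    rw [hγ] at h1
    exact h1.2
  rw [Vset, ← hSd, Sdata, Finset.union_sdiff_of_subset hsub]

/-- U2: the window values are determined -/
lemma window_formula (hj : j ≤ n) (hk : k ≤ n) (hp : p ∈ UB n j k γ e)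
    (hL : Lfun j k γ p = l) (hl : l ≤ min j k) (hSd : Sdata γ j l p = S)
    (hV : (Vset n γ l S).card = j) (i : Fin n) (hij : (i : ℕ) < j) :
    p.1 i = ((Vset n γ l S).orderIsoOfFin hV ⟨(i : ℕ), hij⟩ : Fin n) := by
  obtain ⟨hpj, hpk⟩ := mem_UB_iff.mp hp
  set f : Fin j → Fin n := fun r => p.1 ⟨(r : ℕ), by omega⟩ with hf
  have hmemf : ∀ r, f r ∈ Vset n γ l S := by
    intro r
    rw [← window_image_eq hj hk hp hL hl hSd, Finset.mem_image]
    exact ⟨⟨(r : ℕ), by omega⟩, Finset.mem_filter.mpr ⟨Finset.mem_univ _, r.2⟩, rfl⟩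
  have hmonof : StrictMono f := by
    intro r r' hrr
    apply hpj.2
    · rw [Fin.lt_def]
      exact hrr
    · exact r'.2
  have huniq := Finset.orderEmbOfFin_unique hV hmemf hmonof
  have h1 : p.1 i = f ⟨(i : ℕ), hij⟩ := by
    rw [hf]
  rw [h1, huniq, ← Finset.coe_orderIsoOfFin_apply]

/-- U3: the middle positions are determined -/
lemma mid_formula (hj : j ≤ n) (hk : k ≤ n) (hp : p ∈ UB n j k γ e)
    (hL : Lfun j k γ p = l) (hl : l ≤ min j k) (hPd : Pdata γ l k p = P)
    (hP2 : P.card = k - l) (r : Fin (k - l)) :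
    p.1⁻¹ (γ (embK l k hk r)) = P.orderEmbOfFin hP2 r := by
  obtain ⟨hpj, hpk⟩ := mem_UB_iff.mp hp
  set F : Fin (k - l) → Fin n := fun r => p.1⁻¹ (γ (embK l k hk r)) with hF
  have hmemF : ∀ r, F r ∈ P := by
    intro r
    rw [← hPd, Pdata, Finset.mem_image]
    refine ⟨embK l k hk r, Finset.mem_filter.mpr ⟨Finset.mem_univ _, ?_⟩, rfl⟩
    simp only [embK]
    have := r.2
    constructor <;> omega
  have hmonoF : StrictMono F := by
    intro r r' hrr
    have := hpk.2 (embK l k hk r) (embK l k hk r') (by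
        rw [Fin.lt_def]
        simp only [embK]
        exact Nat.add_lt_add_left hrr l) (by
        simp only [embK]
        have := r'.2
        omega)
    rwa [Equiv.Perm.mul_apply, Equiv.Perm.mul_apply] at this
  exact congrFun (Finset.orderEmbOfFin_unique hP2 hmemF hmonoF) r

lemma P_formula (hj : j ≤ n) (hk : k ≤ n) (hp : p ∈ UB n j k γ e)
    (hL : Lfun j k γ p = l) (hl : l ≤ min j k) (hPd : Pdata γ l k p = P)
    (hP2 : P.card = k - l) (i : Fin n) (h2 : i ∈ P) :
    p.1 i = γ (embK l k hk ((P.orderIsoOfFin hP2).symm ⟨i, h2⟩)) := by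
  set r := (P.orderIsoOfFin hP2).symm ⟨i, h2⟩ with hr
  have h3 := mid_formula hj hk hp hL hl hPd hP2 r
  have h4 : P.orderEmbOfFin hP2 r = i := by
    rw [← Finset.coe_orderIsoOfFin_apply, hr, OrderIso.apply_symm_apply]
  rw [h4] at h3
  rw [← h3]
  simp

lemma P_sign (hj : j ≤ n) (hk : k ≤ n) (hp : p ∈ UB n j k γ e)
    (hL : Lfun j k γ p = l) (hl : l ≤ min j k) (hPd : Pdata γ l k p = P)
    (hP2 : P.card = k - l) (i : Fin n) (h2 : i ∈ P) :
    p.2 i = e (embK l k hk ((P.orderIsoOfFin hP2).symm ⟨i, h2⟩)) := by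
  obtain ⟨hpj, hpk⟩ := mem_UB_iff.mp hp
  set r := (P.orderIsoOfFin hP2).symm ⟨i, h2⟩ with hr
  have hik : ((embK l k hk r : Fin n) : ℕ) < k := by
    simp only [embK]
    have := r.2
    omega
  have h5 := hpk.1 (embK l k hk r) hik
  have h3 := mid_formula hj hk hp hL hl hPd hP2 r
  have h4 : P.orderEmbOfFin hP2 r = i := by
    rw [← Finset.coe_orderIsoOfFin_apply, hr, OrderIso.apply_symm_apply]
  rw [h4] at h3
  simp only [h3] at h5
  rcases he : e (embK l k hk r) <;> rcases hpi : p.2 i <;> simp [he, hpi] at h5 ⊢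

/-- U5: remaining positions go to remaining values -/
lemma maps_Rval (hj : j ≤ n) (hk : k ≤ n) (hp : p ∈ UB n j k γ e)
    (hL : Lfun j k γ p = l) (hl : l ≤ min j k) (hSd : Sdata γ j l p = S)
    (hPd : Pdata γ l k p = P) (x : Fin n) (hx : x ∈ Rpos n j P) :
    p.1 x ∈ Rval n γ k S := by
  have S1 := struct1 hj hk hp hL hl
  obtain ⟨hx1, hx2⟩ := not_lt_of_mem_Rpos x hx
  rw [Rval, Finset.mem_sdiff, Finset.mem_union]
  refine ⟨Finset.mem_univ _, ?_⟩
  rintro (hg | hs)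
  · rw [mem_GammaSet_iff] at hg
    set i := γ⁻¹ (p.1 x) with hi
    have hγ : γ i = p.1 x := by rw [hi]; simp
    have hτ : p.1⁻¹ (γ i) = x := by rw [hγ]; simp
    have hnl : ¬ ((i : ℕ) < l) := by
      intro hcon
      have := (S1 i).mpr hcon
      rw [hτ] at this
      omega
    apply hx2
    rw [← hPd, Pdata, Finset.mem_image]
    exact ⟨i, Finset.mem_filter.mpr ⟨Finset.mem_univ _, by omega, by omega⟩, hτ⟩
  · rw [← hSd, Sdata, Finset.mem_sdiff, Finset.mem_image] at hs
    obtain ⟨⟨w, hw, hww⟩, -⟩ := hs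
    rw [Finset.mem_filter] at hw
    have := p.1.injective hww
    omega

end Uniq

end BAux

namespace BAux
open Finset

variable {n : ℕ}

section Fiber

variable {j k l : ℕ} {γ : Equiv.Perm (Fin n)} {e : Fin n → Bool} {S P : Finset (Fin n)}

/-- the forward direction equivalence -/
noncomputable def fwdEquiv (p : Equiv.Perm (Fin n) × (Fin n → Bool))
    (hmap : ∀ x : ↥(Rpos n j P), p.1 x.1 ∈ Rval n γ k S)
    (hcard : (Rpos n j P).card = (Rval n γ k S).card) :
    ↥(Rpos n j P) ≃ ↥(Rval n γ k S) :=
  Equiv.ofBijective (fun x => ⟨p.1 x.1, hmap x⟩)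
    (by
      rw [Fintype.bijective_iff_injective_and_card]
      constructor
      · intro a b hab
        exact Subtype.ext (p.1.injective (congrArg Subtype.val hab))
      · rw [Fintype.card_coe, Fintype.card_coe, hcard])

lemma fwdEquiv_apply (p : Equiv.Perm (Fin n) × (Fin n → Bool))
    (hmap : ∀ x : ↥(Rpos n j P), p.1 x.1 ∈ Rval n γ k S)
    (hcard : (Rpos n j P).card = (Rval n γ k S).card) (x : ↥(Rpos n j P)) :
    (fwdEquiv p hmap hcard x : Fin n) = p.1 x.1 := rfl

lemma unique_p {p : Equiv.Perm (Fin n) × (Fin n → Bool)}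
    (hj : j ≤ n) (hk : k ≤ n) (hp : p ∈ UB n j k γ e) (hL : Lfun j k γ p = l)
    (hl : l ≤ min j k) (hSd : Sdata γ j l p = S) (hPd : Pdata γ l k p = P)
    (hV : (Vset n γ l S).card = j) (hP2 : P.card = k - l)
    (hS1 : S ⊆ Finset.univ \ GammaSet γ 0 k)
    (hP1 : P ⊆ Finset.univ.filter fun i : Fin n => j ≤ (i : ℕ))
    (hmap : ∀ x : ↥(Rpos n j P), p.1 x.1 ∈ Rval n γ k S)
    (hcard : (Rpos n j P).card = (Rval n γ k S).card) :
    p = (bPerm hV hP2 hk (fwdEquiv p hmap hcard) hl hS1,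
         bSign hP2 hk e (fun x : ↥(Rpos n j P) => p.2 x.1)) := by
  have h1 : p.1 = bPerm hV hP2 hk (fwdEquiv p hmap hcard) hl hS1 := by
    apply Equiv.ext
    intro i
    rw [bPerm_apply]
    by_cases hij : (i : ℕ) < j
    · rw [bFun_window hV hP2 hk _ i hij]
      exact window_formula hj hk hp hL hl hSd hV i hij
    · by_cases hiP : i ∈ P
      · rw [bFun_P hV hP2 hk _ i hij hiP]
        exact P_formula hj hk hp hL hl hPd hP2 i hiP
      · rw [bFun_R hV hP2 hk _ i hij hiP]
        rfl
  have h2 : p.2 = bSign hP2 hk e (fun x : ↥(Rpos n j P) => p.2 x.1) := by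
    funext i
    by_cases hij : (i : ℕ) < j
    · rw [bSign_window hP2 hk _ _ i hij]
      exact (mem_UB_iff.mp hp).1.1 i hij
    · by_cases hiP : i ∈ P
      · rw [bSign_P hP2 hk _ _ i hij hiP]
        exact P_sign hj hk hp hL hl hPd hP2 i hiP
      · rw [bSign_R hP2 hk _ _ i hij hiP]
  exact Prod.ext h1 h2

lemma mem_fiber_iff {p : Equiv.Perm (Fin n) × (Fin n → Bool)} :
    p ∈ ((UB n j k γ e).filter (fun p => Lfun j k γ p = l)).filter
       (fun p => (Sdata γ j l p, Pdata γ l k p) = (S, P)) ↔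
    p ∈ UB n j k γ e ∧ Lfun j k γ p = l ∧ Sdata γ j l p = S ∧ Pdata γ l k p = P := by
  rw [Finset.mem_filter, Finset.mem_filter, Prod.mk.injEq]
  tauto

lemma fiber_card_proof (hj : j ≤ n) (hk : k ≤ n) (hl : l ≤ min j k) (hc : cnd l γ e)
    (hjk : j + k ≤ n + l) (S P : Finset (Fin n))
    (hS : S ∈ (Finset.univ \ GammaSet γ 0 k).powersetCard (j - l))
    (hP : P ∈ (Finset.univ.filter fun i : Fin n => j ≤ (i : ℕ)).powersetCard (k - l)) :
    (((UB n j k γ e).filter (fun p => Lfun j k γ p = l)).filter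
       (fun p => (Sdata γ j l p, Pdata γ l k p) = (S, P))).card
    = Nat.factorial (n + l - j - k) * 2 ^ (n + l - j - k) := by
  rw [Finset.mem_powersetCard] at hS hP
  obtain ⟨hS1, hS2⟩ := hS
  obtain ⟨hP1, hP2⟩ := hP
  have hlj : l ≤ j := by omega
  have hlk : l ≤ k := by omega
  have hV : (Vset n γ l S).card = j := by
    rw [Vset, Finset.card_union_of_disjoint (disjGS (k := k) hS1 hlk),
      card_GammaSet γ 0 l (by omega), hS2]
    omega
  have hcardR : (Rpos n j P).card = (Rval n γ k S).card := by
    rw [card_Rpos hj hP1 hP2 hjk hlk, card_Rval hj hk hjk hS1 hS2 hlj]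
  have hbij : (((UB n j k γ e).filter (fun p => Lfun j k γ p = l)).filter
       (fun p => (Sdata γ j l p, Pdata γ l k p) = (S, P))).card
      = (Finset.univ : Finset ((↥(Rpos n j P) ≃ ↥(Rval n γ k S)) ×
          (↥(Rpos n j P) → Bool))).card := by
    refine Finset.card_bij'
      (fun p hp => (fwdEquiv p (fun x =>
          maps_Rval hj hk (mem_fiber_iff.mp hp).1 (mem_fiber_iff.mp hp).2.1 hl
            (mem_fiber_iff.mp hp).2.2.1 (mem_fiber_iff.mp hp).2.2.2 x.1 x.2) hcardR,
        fun x : ↥(Rpos n j P) => p.2 x.1))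
      (fun b _ => (bPerm hV hP2 hk b.1 hl hS1, bSign hP2 hk e b.2))
      ?_ ?_ ?_ ?_
    · intro p hp
      exact Finset.mem_univ _
    · intro b _
      apply mem_fiber_iff.mpr
      exact ⟨mem_UB_iff.mpr ⟨build_cnd1 hV hP2 hk b.1 hl hS1 b.2,
        build_cnd2 hV hP2 hk b.1 hl hS1 hj hP1 b.2 hc⟩,
        build_Lfun hV hP2 hk b.1 hl hS1 hj hP1 b.2,
        build_Sdata hV hP2 hk b.1 hl hS1 b.2,
        build_Pdata hV hP2 hk b.1 hl hS1 hj hP1 b.2⟩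
    · intro p hp
      exact (unique_p hj hk (mem_fiber_iff.mp hp).1 (mem_fiber_iff.mp hp).2.1 hl
        (mem_fiber_iff.mp hp).2.2.1 (mem_fiber_iff.mp hp).2.2.2 hV hP2 hS1 hP1 _ hcardR).symm
    · intro b _
      refine Prod.ext ?_ ?_
      · apply Equiv.ext
        intro x
        apply Subtype.ext
        show (bPerm hV hP2 hk b.1 hl hS1) x.1 = (b.1 x : Fin n)
        exact bPerm_R_apply hV hP2 hk b.1 hl hS1 x
      · funext x
        show bSign hP2 hk e b.2 x.1 = b.2 x
        obtain ⟨h1, h2⟩ := not_lt_of_mem_Rpos x.1 x.2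
        rw [bSign_R hP2 hk e b.2 x.1 h1 h2]
  rw [hbij, Finset.card_univ, Fintype.card_prod,
    Fintype.card_equiv (Fintype.equivOfCardEq
      (by rw [Fintype.card_coe, Fintype.card_coe, hcardR])),
    Fintype.card_fun, Fintype.card_coe, card_Rpos hj hP1 hP2 hjk hlk,
    Fintype.card_bool]

end Fiber

end BAux

namespace BAux
open Finset

variable {n : ℕ}

section Count

variable {j k l : ℕ} {γ : Equiv.Perm (Fin n)} {e : Fin n → Bool}

lemma Lfun_le (hj : j ≤ n) (hk : k ≤ n) (p : Equiv.Perm (Fin n) × (Fin n → Bool)) :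
    Lfun j k γ p ≤ min j k := by
  rw [Lfun]
  apply le_min
  · have hinj : Set.InjOn (fun i => p.1⁻¹ (γ i))
        ↑(Finset.univ.filter (fun i : Fin n => (i : ℕ) < k ∧ ((p.1⁻¹ (γ i) : Fin n) : ℕ) < j)) := by
      intro a _ b _ hab
      exact γ.injective (p.1⁻¹.injective hab)
    have := Finset.card_le_card_of_injOn (t := Finset.univ.filter fun x : Fin n => (x : ℕ) < j)
      (fun i => p.1⁻¹ (γ i))
      (fun a ha => by
        rw [Finset.mem_coe, Finset.mem_filter] at ha
        exact Finset.mem_filter.mpr ⟨Finset.mem_univ _, ha.2.2⟩) hinj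
    calc _ ≤ (Finset.univ.filter fun x : Fin n => (x : ℕ) < j).card := this
    _ = j := card_filter_lt j hj
  · have hsub : (Finset.univ.filter (fun i : Fin n => (i : ℕ) < k ∧ ((p.1⁻¹ (γ i) : Fin n) : ℕ) < j))
        ⊆ Finset.univ.filter fun i : Fin n => (i : ℕ) < k := by
      intro x hx
      rw [Finset.mem_filter] at hx
      exact Finset.mem_filter.mpr ⟨Finset.mem_univ _, hx.2.1⟩
    calc _ ≤ (Finset.univ.filter fun i : Fin n => (i : ℕ) < k).card := Finset.card_le_card hsub
    _ = k := card_filter_lt k hk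

lemma data_mem (hj : j ≤ n) (hk : k ≤ n) {p : Equiv.Perm (Fin n) × (Fin n → Bool)}
    (hp : p ∈ UB n j k γ e) (hL : Lfun j k γ p = l) (hl : l ≤ min j k) :
    Sdata γ j l p ∈ (Finset.univ \ GammaSet γ 0 k).powersetCard (j - l) ∧
    Pdata γ l k p ∈ (Finset.univ.filter fun i : Fin n => j ≤ (i : ℕ)).powersetCard (k - l) := by
  have S1 := struct1 hj hk hp hL hl
  obtain ⟨hpj, hpk⟩ := mem_UB_iff.mp hp
  constructor
  · rw [Finset.mem_powersetCard]
    constructor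
    · intro x hx
      rw [Sdata, Finset.mem_sdiff] at hx
      obtain ⟨hx1, hx2⟩ := hx
      rw [Finset.mem_sdiff]
      refine ⟨Finset.mem_univ _, ?_⟩
      intro hxk
      rw [mem_GammaSet_iff] at hxk
      apply hx2
      rw [mem_GammaSet_iff]
      rw [Finset.mem_image] at hx1
      obtain ⟨w, hw, rfl⟩ := hx1
      rw [Finset.mem_filter] at hw
      have hτ : p.1⁻¹ (γ (γ⁻¹ (p.1 w))) = w := by simp
      have := (S1 (γ⁻¹ (p.1 w))).mp ⟨by omega, by rw [hτ]; exact hw.2⟩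
      omega
    · rw [Sdata]
      have hsub : GammaSet γ 0 l ⊆
          (Finset.univ.filter fun i : Fin n => (i : ℕ) < j).image p.1 := by
        intro x hx
        rw [mem_GammaSet_iff] at hx
        have h1 := (S1 (γ⁻¹ x)).mpr (by omega)
        rw [Finset.mem_image]
        refine ⟨p.1⁻¹ (γ (γ⁻¹ x)), Finset.mem_filter.mpr ⟨Finset.mem_univ _, ?_⟩, by simp⟩
        have : γ (γ⁻¹ x) = x := by simp
        rw [this]
        rw [this] at h1
        exact h1.2
      rw [Finset.card_sdiff_of_subset hsub, Finset.card_image_of_injective _ p.1.injective,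
        card_filter_lt j hj, card_GammaSet γ 0 l (by omega)]
      omega
  · rw [Finset.mem_powersetCard]
    constructor
    · intro x hx
      rw [Pdata, Finset.mem_image] at hx
      obtain ⟨i, hi, rfl⟩ := hx
      rw [Finset.mem_filter] at hi
      refine Finset.mem_filter.mpr ⟨Finset.mem_univ _, ?_⟩
      by_contra hlt
      have := (S1 i).mp ⟨hi.2.2, by omega⟩
      omega
    · rw [Pdata, Finset.card_image_of_injective _
        (fun a b hab => γ.injective (p.1⁻¹.injective hab)), card_filter_ge_lt l k hk]

/-- The monster: each (S, P)-fiber has exactly `(n+l-j-k)! 2^(n+l-j-k)` elements. -/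
lemma fiber_card (hj : j ≤ n) (hk : k ≤ n) (hl : l ≤ min j k) (hc : cnd l γ e)
    (hjk : j + k ≤ n + l) (S P : Finset (Fin n))
    (hS : S ∈ (Finset.univ \ GammaSet γ 0 k).powersetCard (j - l))
    (hP : P ∈ (Finset.univ.filter fun i : Fin n => j ≤ (i : ℕ)).powersetCard (k - l)) :
    (((UB n j k γ e).filter (fun p => Lfun j k γ p = l)).filter
       (fun p => (Sdata γ j l p, Pdata γ l k p) = (S, P))).card
    = Nat.factorial (n + l - j - k) * 2 ^ (n + l - j - k) := by
  exact fiber_card_proof hj hk hl hc hjk S P hS hP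

lemma count_fiber (hj : j ≤ n) (hk : k ≤ n) (hl : l ≤ min j k) :
    ((UB n j k γ e).filter (fun p => Lfun j k γ p = l)).card =
      if cnd l γ e ∧ j + k ≤ n + l then coefB n j k l else 0 := by
  by_cases hC : cnd l γ e ∧ j + k ≤ n + l
  · rw [if_pos hC]
    obtain ⟨hc, hjk⟩ := hC
    set tset := ((Finset.univ \ GammaSet γ 0 k).powersetCard (j - l)) ×ˢ
      ((Finset.univ.filter fun i : Fin n => j ≤ (i : ℕ)).powersetCard (k - l)) with htset
    have hmaps : ∀ p ∈ (UB n j k γ e).filter (fun p => Lfun j k γ p = l),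
        (Sdata γ j l p, Pdata γ l k p) ∈ tset := by
      intro p hp
      rw [Finset.mem_filter] at hp
      have := data_mem hj hk hp.1 hp.2 hl
      rw [htset, Finset.mem_product]
      exact this
    rw [Finset.card_eq_sum_card_fiberwise hmaps]
    have hconst : ∀ b ∈ tset,
        (((UB n j k γ e).filter (fun p => Lfun j k γ p = l)).filter
          (fun p => (Sdata γ j l p, Pdata γ l k p) = b)).card
        = Nat.factorial (n + l - j - k) * 2 ^ (n + l - j - k) := by
      rintro ⟨S, P⟩ hb
      rw [htset, Finset.mem_product] at hb
      exact fiber_card hj hk hl hc hjk S P hb.1 hb.2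
    rw [Finset.sum_congr rfl hconst, Finset.sum_const, smul_eq_mul]
    rw [htset, Finset.card_product, Finset.card_powersetCard, Finset.card_powersetCard,
      Finset.card_sdiff_of_subset (Finset.subset_univ _), card_GammaSet γ 0 k hk,
      card_filter_ge j hj]
    rw [Finset.card_univ, Fintype.card_fin, coefB, Nat.sub_zero]
    ring
  · rw [if_neg hC, Finset.card_eq_zero, Finset.eq_empty_iff_forall_notMem]
    intro p hp
    rw [Finset.mem_filter] at hp
    exact hC ⟨struct2 hj hk hp.1 hp.2 hl, struct3 hj hk hp.1 hp.2 hl⟩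

theorem count_pairs' (hj : j ≤ n) (hk : k ≤ n) :
    (UB n j k γ e).card =
      ∑ l ∈ Finset.range (min j k + 1),
        if cnd l γ e ∧ j + k ≤ n + l then coefB n j k l else 0 := by
  have hmaps : ∀ p ∈ UB n j k γ e, Lfun j k γ p ∈ Finset.range (min j k + 1) := by
    intro p _
    rw [Finset.mem_range]
    have := Lfun_le (γ := γ) hj hk p
    omega
  rw [Finset.card_eq_sum_card_fiberwise hmaps]
  apply Finset.sum_congr rfl
  intro l hl
  rw [Finset.mem_range] at hl
  exact count_fiber hj hk (by omega)

end Count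

end BAux

namespace BAux

theorem count_pairs (n j k : ℕ) (hj : j ≤ n) (hk : k ≤ n) (γ : Equiv.Perm (Fin n))
    (e : Fin n → Bool) :
    (UB n j k γ e).card =
      ∑ l ∈ Finset.range (min j k + 1),
        if cnd l γ e ∧ j + k ≤ n + l then coefB n j k l else 0 := by
  exact count_pairs' hj hk

theorem keycount (n j k : ℕ) (hj : j ≤ n) (hk : k ≤ n) (g : Bgroup n) :
    ((FB n j).filter (fun u => u⁻¹ * g ∈ FB n k)).card =
      ∑ l ∈ Finset.range (min j k + 1),
        if g ∈ FB n l ∧ j + k ≤ n + l then coefB n j k l else 0 := by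
  have hcard : ((FB n j).filter (fun u => u⁻¹ * g ∈ FB n k)).card
      = (UB n j k (pp g) (sp g)).card := by
    apply Finset.card_bij (fun u _ => (pp u, sp u))
    · intro u hu
      rw [Finset.mem_filter] at hu
      obtain ⟨hu1, hu2⟩ := hu
      rw [UB, Finset.mem_filter]
      refine ⟨Finset.mem_univ _, ?_, ?_⟩
      · exact (mem_FB_iff hj u).mp hu1
      · have h1 := (mem_FB_iff hk _).mp hu2
        have hp : pp (u⁻¹ * g) = (pp u)⁻¹ * pp g := by rw [pp_mul, pp_inv]
        have hs : sp (u⁻¹ * g) = fun i => xor (sp g i) (sp u ((pp u)⁻¹ (pp g i))) := by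
          funext i
          rw [sp_mul, sp_inv]
        rw [hp, hs] at h1
        exact h1
    · intro u1 h1 u2 h2 heq
      exact ext_of u1 u2 (congrArg Prod.fst heq) (congrArg Prod.snd heq)
    · intro p hp
      rw [UB, Finset.mem_filter] at hp
      obtain ⟨-, hp1, hp2⟩ := hp
      refine ⟨mk' p.1 p.2, ?_, by rw [pp_mk', sp_mk']⟩
      rw [Finset.mem_filter]
      constructor
      · rw [mem_FB_iff hj, pp_mk', sp_mk']
        exact hp1
      · rw [mem_FB_iff hk]
        have hp' : pp (mk' p.1 p.2) = p.1 := pp_mk' _ _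
        have hs' : sp (mk' p.1 p.2) = p.2 := sp_mk' _ _
        have h1 : pp ((mk' p.1 p.2)⁻¹ * g) = p.1⁻¹ * pp g := by
          rw [pp_mul, pp_inv, hp']
        have h2 : sp ((mk' p.1 p.2)⁻¹ * g) = fun i => xor (sp g i) (p.2 (p.1⁻¹ (pp g i))) := by
          funext i
          rw [sp_mul, sp_inv, hp', hs']
        rw [h1, h2]
        exact hp2
  rw [hcard, count_pairs n j k hj hk (pp g) (sp g)]
  apply Finset.sum_congr rfl
  intro l hl
  rw [Finset.mem_range] at hl
  have hln : l ≤ n := by omega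
  simp only [mem_FB_iff hln]

end BAux



open BAux in
/-- Multiplication formula in `ℚ[B_n]`:
`x_j * x_k = ∑_{l=0}^{min(j,k)} (n-j choose k-l)(n-k choose j-l)(n-j-k+l)! 2^(n-j-k+l) x_l`,
where terms with `n-j-k+l < 0` vanish. -/
theorem xB_mul_xB (n j k : ℕ) (hj : j ≤ n) (hk : k ≤ n) :
    xB n j * xB n k =
      ∑ l ∈ Finset.range (min j k + 1),
        (if j + k ≤ n + l then
            (((n - j).choose (k - l) * (n - k).choose (j - l) *
              Nat.factorial (n + l - j - k) * 2 ^ (n + l - j - k) : ℕ) : ℚ)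
          else 0) • xB n l := by
  ext g
  rw [xB_eq, xB_eq, Finset.sum_mul_sum]
  have hL : (∑ u ∈ FB n j, ∑ v ∈ FB n k,
      (MonoidAlgebra.single u 1 * MonoidAlgebra.single v 1 : MonoidAlgebra ℚ (Bgroup n))).coeff g
      = ((FB n j).filter (fun u => u⁻¹ * g ∈ FB n k)).card := by
    rw [MonoidAlgebra.coeff_sum, Finsupp.finset_sum_apply]
    have inner : ∀ u : Bgroup n, (∑ v ∈ FB n k,
        (MonoidAlgebra.single u 1 * MonoidAlgebra.single v 1 : MonoidAlgebra ℚ (Bgroup n))).coeff g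
        = if u⁻¹ * g ∈ FB n k then 1 else 0 := by
      intro u
      rw [MonoidAlgebra.coeff_sum, Finsupp.finset_sum_apply]
      have : ∀ v ∈ FB n k, (MonoidAlgebra.single u 1 * MonoidAlgebra.single v 1 :
          MonoidAlgebra ℚ (Bgroup n)).coeff g = if v = u⁻¹ * g then 1 else 0 := by
        intro v _
        rw [MonoidAlgebra.single_mul_single, one_mul, MonoidAlgebra.single_apply]
        congr 1
        simp only [eq_iff_iff]
        constructor
        · intro h; rw [← h]; group
        · intro h; rw [h]; group
      rw [Finset.sum_congr rfl this, Finset.sum_ite_eq' (FB n k) (u⁻¹ * g) (fun _ => (1 : ℚ))]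
    rw [Finset.sum_congr rfl (fun u _ => inner u), Finset.sum_boole]
  rw [hL]
  have hR : ∀ l : ℕ, ((if j + k ≤ n + l then
            (((n - j).choose (k - l) * (n - k).choose (j - l) *
              Nat.factorial (n + l - j - k) * 2 ^ (n + l - j - k) : ℕ) : ℚ)
          else 0) • xB n l).coeff g
      = (if j + k ≤ n + l then (coefB n j k l : ℚ) else 0) * (if g ∈ FB n l then 1 else 0) := by
    intro l
    set c : ℚ := (if j + k ≤ n + l then (coefB n j k l : ℚ) else 0) with hc
    have hcoef : (if j + k ≤ n + l then
            (((n - j).choose (k - l) * (n - k).choose (j - l) *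
              Nat.factorial (n + l - j - k) * 2 ^ (n + l - j - k) : ℕ) : ℚ)
          else 0) = c := by rw [hc, coefB]
    rw [hcoef]
    have hsmul : c • xB n l = ∑ w ∈ FB n l, MonoidAlgebra.single w c := by
      rw [xB_eq, Finset.smul_sum]
      apply Finset.sum_congr rfl
      intro w _
      rw [MonoidAlgebra.smul_single', mul_one]
    rw [hsmul, MonoidAlgebra.coeff_sum, Finsupp.finset_sum_apply]
    have : ∀ w ∈ FB n l, (MonoidAlgebra.single w c : MonoidAlgebra ℚ (Bgroup n)).coeff g
        = if w = g then c else 0 := by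
      intro w _
      rw [MonoidAlgebra.single_apply]
    rw [Finset.sum_congr rfl this, Finset.sum_ite_eq' (FB n l) g (fun _ => c)]
    by_cases h1 : g ∈ FB n l <;> simp [h1]
  rw [MonoidAlgebra.coeff_sum, Finsupp.finset_sum_apply, Finset.sum_congr rfl (fun l _ => hR l),
    keycount n j k hj hk g]
  push_cast
  apply Finset.sum_congr rfl
  intro l _
  by_cases h1 : g ∈ FB n l <;> by_cases h2 : j + k ≤ n + l <;> simp [h1, h2]
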